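/- For n ≥ 2, a 6-modular Hadamard matrix of order n exists if and only if n is even. -/

import Mathlib

open Matrix

lemma dotK_aux (m : ℕ) (i j : Fin m) :
    ∑ k : Fin m, (if i = k then (-1:ℤ) else 1) * (if j = k then (-1:ℤ) else 1)
      = if i = j then (m : ℤ) else (m : ℤ) - 4 := by
  rcases eq_or_ne i j with rfl | hij
  · have h : ∀ k : Fin m, (if i = k then (-1:ℤ) else 1) * (if i = k then (-1:ℤ) else 1) = 1 :=
      fun k => by split_ifs <;> norm_num
    rw [Finset.sum_congr rfl fun k _ => h k]
    simp
  · rw [if_neg hij]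
    have h : ∀ k : Fin m, (if i = k then (-1:ℤ) else 1) * (if j = k then (-1:ℤ) else 1)
        = 1 - (if i = k then 2 else 0) - (if j = k then 2 else 0) := by
      intro k
      by_cases h1 : i = k <;> by_cases h2 : j = k
      · exact absurd (h1.trans h2.symm) hij
      all_goals simp [h1, h2]
    rw [Finset.sum_congr rfl fun k _ => h k]
    rw [Finset.sum_sub_distrib, Finset.sum_sub_distrib]
    simp [Finset.sum_ite_eq]
    ring

/-- `H` is an `m`-modular Hadamard matrix of order `n`: a ±1 matrix with
`H * Hᵀ ≡ n • I (mod m)`. -/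
def IsMHadamard (m n : ℕ) {ι : Type} [Fintype ι] [DecidableEq ι]
    (H : Matrix ι ι ℤ) : Prop :=
  (∀ i j, H i j = 1 ∨ H i j = -1) ∧
  ∀ i j, (H * Hᵀ) i j ≡ (if i = j then (n : ℤ) else 0) [ZMOD m]

theorem stmt_10 (n : ℕ) (hn : 2 ≤ n) :
    (∃ H : Matrix (Fin n) (Fin n) ℤ, IsMHadamard 6 n H) ↔ (Even n) := by
  constructor
  · rintro ⟨H, hpm, hmod⟩
    set i0 : Fin n := ⟨0, by omega⟩
    set i1 : Fin n := ⟨1, by omega⟩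
    have hne : i0 ≠ i1 := by simp [i0, i1, Fin.ext_iff]
    have h := hmod i0 i1
    rw [if_neg hne] at h
    have h6 : (6:ℤ) ∣ (H * Hᵀ) i0 i1 := Int.modEq_zero_iff_dvd.mp h
    have h2 : (2:ℤ) ∣ (H * Hᵀ) i0 i1 := dvd_trans (by norm_num) h6
    have hmA : (H * Hᵀ) i0 i1 = ∑ k, H i0 k * H i1 k := by
      simp [Matrix.mul_apply]
    have hsub : (2:ℤ) ∣ (∑ k, H i0 k * H i1 k) - (n:ℤ) := by
      have heq : (∑ k, H i0 k * H i1 k) - (n:ℤ)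
          = ∑ k : Fin n, (H i0 k * H i1 k - 1) := by
        rw [Finset.sum_sub_distrib]
        simp
      rw [heq]
      refine Finset.dvd_sum fun k _ => ?_
      rcases hpm i0 k with h1 | h1 <;> rcases hpm i1 k with h2' | h2' <;>
        simp [h1, h2']
    have hdn : (2:ℤ) ∣ (n:ℤ) := by
      have := dvd_sub (hmA ▸ h2) hsub
      simpa using this
    have : 2 ∣ n := by exact_mod_cast hdn
    exact even_iff_two_dvd.mpr this
  · intro hev
    obtain ⟨c, hc⟩ := hev
    have hr : n % 6 = 0 ∨ n % 6 = 2 ∨ n % 6 = 4 := by omega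
    rcases hr with hr | hr | hr
    · -- all-ones matrix
      refine ⟨Matrix.of fun _ _ => 1, fun i j => Or.inl rfl, fun i j => ?_⟩
      have hval : ((Matrix.of fun _ _ => (1:ℤ) : Matrix (Fin n) (Fin n) ℤ) *
          (Matrix.of fun _ _ => (1:ℤ) : Matrix (Fin n) (Fin n) ℤ)ᵀ) i j = (n:ℤ) := by
        simp [Matrix.mul_apply]
      rw [hval]
      rcases eq_or_ne i j with rfl | hij
      · simp
      · rw [if_neg hij]
        exact Int.modEq_zero_iff_dvd.mpr (by omega)
    · -- n ≡ 2 (mod 6): [[1,1],[1,-1]] ⊗ (J - 2I)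
      obtain ⟨m, rfl⟩ : ∃ m, n = m + m := ⟨c, by omega⟩
      set K : Matrix (Fin m) (Fin m) ℤ := Matrix.of fun i j => if i = j then -1 else 1 with hK
      set M : Matrix (Fin m ⊕ Fin m) (Fin m ⊕ Fin m) ℤ :=
        Matrix.fromBlocks K K K (-K) with hM
      set e := finSumFinEquiv (m := m) (n := m)
      refine ⟨M.submatrix e.symm e.symm, ?_, ?_⟩
      · intro i j
        rcases hx : e.symm i with a | a <;> rcases hy : e.symm j with b | b <;>
          simp only [Matrix.submatrix_apply, hx, hy, hM,
            Matrix.fromBlocks_apply₁₁, Matrix.fromBlocks_apply₁₂,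
            Matrix.fromBlocks_apply₂₁, Matrix.fromBlocks_apply₂₂,
            Matrix.neg_apply, hK, Matrix.of_apply] <;>
          split_ifs <;> norm_num
      · intro i j
        have hmul : (M.submatrix e.symm e.symm) * (M.submatrix e.symm e.symm)ᵀ
            = (M * Mᵀ).submatrix e.symm e.symm := by
          rw [Matrix.transpose_submatrix, Matrix.submatrix_mul_equiv]
        rw [hmul, Matrix.submatrix_apply]
        have hij : i = j ↔ e.symm i = e.symm j := (e.symm.injective.eq_iff).symm
        have expand : ∀ x y : Fin m ⊕ Fin m,
            (M * Mᵀ) x y = ∑ k : Fin m ⊕ Fin m, M x k * M y k := by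
          intro x y
          simp [Matrix.mul_apply]
        have hcast : ((m + m : ℕ) : ℤ) = 2 * (m:ℤ) := by push_cast; ring
        rcases hx : e.symm i with a | a <;> rcases hy : e.symm j with b | b
        · have hval : (M * Mᵀ) (Sum.inl a) (Sum.inl b)
              = 2 * (if a = b then (m:ℤ) else (m:ℤ) - 4) := by
            rw [expand, Fintype.sum_sum_type]
            simp only [hM, Matrix.fromBlocks_apply₁₁, Matrix.fromBlocks_apply₁₂,
              hK, Matrix.of_apply]
            rw [dotK_aux]
            ring
          rw [hval]
          rcases eq_or_ne a b with rfl | hab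
          · rw [if_pos rfl, if_pos (hij.mpr (by rw [hx, hy])), hcast]
          · have hne : i ≠ j := fun h => hab (Sum.inl.inj (by rw [← hx, ← hy, hij.mp h]))
            rw [if_neg hab, if_neg hne]
            exact Int.modEq_zero_iff_dvd.mpr (by omega)
        · have hval : (M * Mᵀ) (Sum.inl a) (Sum.inr b) = 0 := by
            rw [expand, Fintype.sum_sum_type]
            simp only [hM, Matrix.fromBlocks_apply₁₁, Matrix.fromBlocks_apply₁₂,
              Matrix.fromBlocks_apply₂₁, Matrix.fromBlocks_apply₂₂,
              Matrix.neg_apply, hK, Matrix.of_apply, mul_neg]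
            rw [Finset.sum_neg_distrib]
            ring
          have hne : i ≠ j := fun h => by
            have h2 := hij.mp h; rw [hx, hy] at h2; exact Sum.inl_ne_inr h2
          rw [hval, if_neg hne]
        · have hval : (M * Mᵀ) (Sum.inr a) (Sum.inl b) = 0 := by
            rw [expand, Fintype.sum_sum_type]
            simp only [hM, Matrix.fromBlocks_apply₁₁, Matrix.fromBlocks_apply₁₂,
              Matrix.fromBlocks_apply₂₁, Matrix.fromBlocks_apply₂₂,
              Matrix.neg_apply, hK, Matrix.of_apply, neg_mul]
            rw [Finset.sum_neg_distrib]
            ring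
          have hne : i ≠ j := fun h => by
            have h2 := hij.mp h; rw [hx, hy] at h2; exact Sum.inr_ne_inl h2
          rw [hval, if_neg hne]
        · have hval : (M * Mᵀ) (Sum.inr a) (Sum.inr b)
              = 2 * (if a = b then (m:ℤ) else (m:ℤ) - 4) := by
            rw [expand, Fintype.sum_sum_type]
            simp only [hM, Matrix.fromBlocks_apply₂₁, Matrix.fromBlocks_apply₂₂,
              Matrix.neg_apply, hK, Matrix.of_apply, neg_mul, mul_neg, neg_neg]
            rw [dotK_aux]
            ring
          rw [hval]
          rcases eq_or_ne a b with rfl | hab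
          · rw [if_pos rfl, if_pos (hij.mpr (by rw [hx, hy])), hcast]
          · have hne : i ≠ j := fun h => hab (Sum.inr.inj (by rw [← hx, ← hy, hij.mp h]))
            rw [if_neg hab, if_neg hne]
            exact Int.modEq_zero_iff_dvd.mpr (by omega)
    · -- n ≡ 4 (mod 6): J - 2I
      refine ⟨Matrix.of fun i j => if i = j then -1 else 1, ?_, ?_⟩
      · intro i j; dsimp; split_ifs <;> simp
      · intro i j
        have hval : ((Matrix.of fun i j => if i = j then (-1:ℤ) else 1 :
              Matrix (Fin n) (Fin n) ℤ) *
            (Matrix.of fun i j => if i = j then (-1:ℤ) else 1 :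
              Matrix (Fin n) (Fin n) ℤ)ᵀ) i j
            = if i = j then (n:ℤ) else (n:ℤ) - 4 := by
          simp only [Matrix.mul_apply, Matrix.transpose_apply, Matrix.of_apply]
          exact dotK_aux n i j
        rw [hval]
        rcases eq_or_ne i j with rfl | hij
        · simp
        · rw [if_neg hij, if_neg hij]
          exact Int.modEq_zero_iff_dvd.mpr (by omega)
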